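/- Let S be a finite family of entrywise nonnegative matrices in ℝ^{n×n} and μ : S → [0,1] with ∑_{A∈S} μ(A) = 1. If the spectral radius of the expectation matrix satisfies ρ(E_μ[S]) < 1, where E_μ[S] = ∑_{A∈S} μ(A) A, then there exist constants C > 0 and β > 0 such that for all k ≥ 1 and all y ∈ ℝ^n, ∑_{w ∈ S^k} (∏_{m=1}^k μ(w_m)) ‖A_{w_k} ⋯ A_{w_1} y‖_∞ ≤ C e^{−βk} ‖y‖_∞. -/

import Mathlib

open Matrix BigOperators

/-- The spectral radius of a real square matrix: the maximum modulus of its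
complex eigenvalues. -/
noncomputable def specRad {m : Type*} [Fintype m] [DecidableEq m]
    (A : Matrix m m ℝ) : ℝ :=
  (spectralRadius ℂ (A.map (algebraMap ℝ ℂ))).toReal

/-- Ordered matrix product `A (w (k-1)) * ⋯ * A (w 0)` along a word `w`
(i.e. `A_{w_k} ⋯ A_{w_1}` with 1-based indexing). -/
def wordProd {n k : ℕ} {ι : Type*} (A : ι → Matrix (Fin n) (Fin n) ℝ)
    (w : Fin k → ι) : Matrix (Fin n) (Fin n) ℝ :=
  ((List.ofFn fun m => A (w m)).reverse).prod

open scoped ENNReal NNReal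

attribute [local instance] Matrix.linftyOpNormedRing Matrix.linftyOpNormedAlgebra

section auxlemmas
variable {n : ℕ} {ι : Type*} [Fintype ι]

lemma gelfand_decay {d : ℕ} (a : Matrix (Fin d) (Fin d) ℂ)
    (h : spectralRadius ℂ a < 1) :
    ∃ C > (0:ℝ), ∃ r : ℝ, 0 < r ∧ r < 1 ∧ ∀ k : ℕ, ‖a ^ k‖ ≤ C * r ^ k := by
  obtain ⟨u, hu1, hu2⟩ := exists_between h
  have hu0 : 0 < u := lt_of_le_of_lt (zero_le) hu1
  have hutop : u ≠ ⊤ := (hu2.trans_le le_top).ne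
  set r : ℝ := u.toReal with hr
  have hr0 : 0 < r := ENNReal.toReal_pos hu0.ne' hutop
  have hr1 : r < 1 := by
    have := (ENNReal.toReal_lt_toReal hutop (by simp)).mpr hu2
    simpa using this
  have htends := spectrum.pow_nnnorm_pow_one_div_tendsto_nhds_spectralRadius a
  have hev : ∀ᶠ k : ℕ in Filter.atTop,
      (‖a ^ k‖₊ : ℝ≥0∞) ^ (1 / (k:ℝ)) < u :=
    htends.eventually_lt_const hu1
  obtain ⟨N, hN⟩ := Filter.eventually_atTop.mp hev
  have hbig : ∀ k : ℕ, max N 1 ≤ k → ‖a ^ k‖ ≤ r ^ k := by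
    intro k hk
    have hk1 : (1:ℕ) ≤ k := le_trans (le_max_right _ _) hk
    have hkne : (k:ℝ) ≠ 0 := by positivity
    have h2 := hN k (le_trans (le_max_left _ _) hk)
    have h3 : ((‖a ^ k‖₊ : ℝ≥0∞) ^ (1 / (k:ℝ))) ^ (k:ℕ) ≤ u ^ k :=
      pow_le_pow_left' h2.le k
    have h4 : (‖a ^ k‖₊ : ℝ≥0∞) ≤ u ^ k := by
      rwa [← ENNReal.rpow_natCast ((‖a ^ k‖₊ : ℝ≥0∞) ^ (1 / (k:ℝ))),
        ← ENNReal.rpow_mul, one_div, inv_mul_cancel₀ hkne, ENNReal.rpow_one] at h3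
    have h5 : ‖a ^ k‖ ≤ (u ^ k).toReal := by
      have := ENNReal.toReal_mono (by simp [hutop, ENNReal.pow_ne_top]) h4
      simpa using this
    simpa [ENNReal.toReal_pow] using h5
  set N₁ := max N 1
  refine ⟨(∑ i ∈ Finset.range N₁, ‖a ^ i‖ / r ^ i) + 1, by positivity, r, hr0, hr1, ?_⟩
  intro k
  rcases lt_or_ge k N₁ with hk | hk
  · have h1 : ‖a ^ k‖ / r ^ k ≤ ∑ i ∈ Finset.range N₁, ‖a ^ i‖ / r ^ i :=
      Finset.single_le_sum (f := fun i => ‖a ^ i‖ / r ^ i)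
        (fun i _ => by positivity) (Finset.mem_range.mpr hk)
    have h2 : ‖a ^ k‖ / r ^ k ≤ (∑ i ∈ Finset.range N₁, ‖a ^ i‖ / r ^ i) + 1 :=
      h1.trans (by linarith)
    calc ‖a ^ k‖ = (‖a ^ k‖ / r ^ k) * r ^ k := by field_simp
    _ ≤ _ := mul_le_mul_of_nonneg_right h2 (by positivity)
  · have h1 := hbig k hk
    have hC1 : (1:ℝ) ≤ (∑ i ∈ Finset.range N₁, ‖a ^ i‖ / r ^ i) + 1 :=
      le_add_of_nonneg_left (Finset.sum_nonneg fun i _ => by positivity)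
    calc ‖a ^ k‖ ≤ r ^ k := h1
    _ = 1 * r ^ k := (one_mul _).symm
    _ ≤ _ := mul_le_mul_of_nonneg_right hC1 (by positivity)

omit [Fintype ι] in
lemma wordProd_snoc {k : ℕ} (A : ι → Matrix (Fin n) (Fin n) ℝ)
    (w : Fin k → ι) (f : ι) :
    wordProd A (Fin.snoc w f) = A f * wordProd A w := by
  unfold wordProd
  rw [List.ofFn_succ']
  simp [List.reverse_concat, Fin.snoc_castSucc, Fin.snoc_last]

lemma key_sum (A : ι → Matrix (Fin n) (Fin n) ℝ) (μ : ι → ℝ) :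
    ∀ k : ℕ, ∑ w : Fin k → ι, (∏ m, μ (w m)) • wordProd A w
      = (∑ f, μ f • A f) ^ k := by
  intro k
  induction k with
  | zero =>
    simp [wordProd, Finset.sum_const]
  | succ k ih =>
    rw [pow_succ', ← ih, Finset.sum_mul_sum]
    rw [← Equiv.sum_comp (Fin.snocEquiv fun _ => ι)
      (fun w => (∏ m, μ (w m)) • wordProd A w), Fintype.sum_prod_type]
    refine Finset.sum_congr rfl fun f _ => Finset.sum_congr rfl fun w' _ => ?_
    simp only [Fin.snocEquiv, Equiv.coe_fn_mk, Fin.prod_univ_castSucc,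
      Fin.snoc_castSucc, Fin.snoc_last, wordProd_snoc]
    rw [smul_mul_smul_comm, mul_comm]

omit [Fintype ι] in
lemma list_prod_nonneg : ∀ (l : List (Matrix (Fin n) (Fin n) ℝ)),
    (∀ B ∈ l, ∀ i j, 0 ≤ B i j) → ∀ i j, 0 ≤ l.prod i j := by
  intro l
  induction l with
  | nil =>
    intro _ i j
    simp only [List.prod_nil]
    rcases eq_or_ne i j with h | h <;> simp [Matrix.one_apply, h]
  | cons B l ih =>
    intro h i j
    rw [List.prod_cons, Matrix.mul_apply]
    exact Finset.sum_nonneg fun m _ => mul_nonneg (h B (by simp) i m)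
      (ih (fun C hC => h C (by simp [hC])) m j)

omit [Fintype ι] in
lemma wordProd_nonneg {k : ℕ} (A : ι → Matrix (Fin n) (Fin n) ℝ)
    (hA : ∀ f i j, 0 ≤ A f i j) (w : Fin k → ι) (i j : Fin n) :
    0 ≤ wordProd A w i j := by
  apply list_prod_nonneg
  intro B hB i j
  rw [List.mem_reverse, List.mem_ofFn] at hB
  obtain ⟨m, rfl⟩ := hB
  exact hA _ i j

omit [Fintype ι] in
lemma mulVec_norm_le (P : Matrix (Fin n) (Fin n) ℝ)
    (hP : ∀ i j, 0 ≤ P i j) (y : Fin n → ℝ) :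
    ‖P *ᵥ y‖ ≤ (∑ i, ∑ j, P i j) * ‖y‖ := by
  have hS : 0 ≤ ∑ i, ∑ j, P i j :=
    Finset.sum_nonneg fun i _ => Finset.sum_nonneg fun j _ => hP i j
  rw [pi_norm_le_iff_of_nonneg (mul_nonneg hS (norm_nonneg y))]
  intro i
  calc ‖(P *ᵥ y) i‖ = |∑ j, P i j * y j| := by rfl
  _ ≤ ∑ j, |P i j * y j| := Finset.abs_sum_le_sum_abs _ _
  _ ≤ ∑ j, P i j * ‖y‖ := by
      refine Finset.sum_le_sum fun j _ => ?_
      rw [abs_mul, abs_of_nonneg (hP i j)]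
      exact mul_le_mul_of_nonneg_left (norm_le_pi_norm y j) (hP i j)
  _ = (∑ j, P i j) * ‖y‖ := by rw [Finset.sum_mul]
  _ ≤ (∑ i, ∑ j, P i j) * ‖y‖ := by
      refine mul_le_mul_of_nonneg_right ?_ (norm_nonneg y)
      exact Finset.single_le_sum (f := fun i => ∑ j, P i j)
        (fun i _ => Finset.sum_nonneg fun j _ => hP i j) (Finset.mem_univ i)

omit [Fintype ι] in
lemma rowsum_le_norm (B : Matrix (Fin n) (Fin n) ℝ)
    (hB : ∀ i j, 0 ≤ B i j) (i : Fin n) :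
    ∑ j, B i j ≤ ‖B.map (algebraMap ℝ ℂ)‖ := by
  have h1 : (∑ j, ‖(B.map (algebraMap ℝ ℂ)) i j‖₊) ≤ ‖B.map (algebraMap ℝ ℂ)‖₊ := by
    rw [Matrix.linfty_opNNNorm_def]
    exact Finset.le_sup (f := fun i => ∑ j, ‖(B.map (algebraMap ℝ ℂ)) i j‖₊)
      (Finset.mem_univ i)
  have h2 : ∑ j, B i j = ((∑ j, ‖(B.map (algebraMap ℝ ℂ)) i j‖₊ : ℝ≥0) : ℝ) := by
    push_cast
    refine Finset.sum_congr rfl fun j _ => ?_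
    simp [Matrix.map_apply, abs_of_nonneg (hB i j)]
  rw [h2, ← coe_nnnorm]
  exact_mod_cast h1

end auxlemmas

theorem stmt10 {n : ℕ} {ι : Type*} [Fintype ι]
    (A : ι → Matrix (Fin n) (Fin n) ℝ) (hA : ∀ f i j, 0 ≤ A f i j)
    (μ : ι → ℝ) (hμ0 : ∀ f, 0 ≤ μ f) (hμ1 : ∑ f, μ f = 1)
    (hρ : specRad (∑ f, μ f • A f) < 1) :
    ∃ C > (0 : ℝ), ∃ β > (0 : ℝ), ∀ k : ℕ, 1 ≤ k → ∀ y : Fin n → ℝ,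
      ∑ w : Fin k → ι, (∏ m, μ (w m)) * ‖wordProd A w *ᵥ y‖ ≤
        C * Real.exp (-β * k) * ‖y‖ := by
  classical
  set M := ∑ f, μ f • A f with hM
  set N := M.map (algebraMap ℝ ℂ) with hN
  -- spectral radius of N (as ENNReal) is < 1
  have hρ' : spectralRadius ℂ N < 1 := by
    have hle := spectrum.spectralRadius_le_pow_nnnorm_pow_one_div ℂ N 0
    have hfin : spectralRadius ℂ N ≠ ⊤ := by
      refine (hle.trans_lt ?_).ne
      exact ENNReal.mul_lt_top (ENNReal.rpow_lt_top_of_nonneg (by norm_num)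
        ENNReal.coe_ne_top) (ENNReal.rpow_lt_top_of_nonneg (by norm_num)
        ENNReal.coe_ne_top)
    rw [← ENNReal.toReal_lt_toReal hfin (by simp)]
    have h' : (spectralRadius ℂ N).toReal < 1 := hρ
    simpa using h'
  obtain ⟨C₀, hC₀, r, hr0, hr1, hpow⟩ := gelfand_decay N hρ'
  refine ⟨(n : ℝ) * C₀ + 1, by positivity, -Real.log r,
    by simpa using neg_pos.mpr (Real.log_neg hr0 hr1), ?_⟩
  intro k _ y
  have hexp : Real.exp (-(-Real.log r) * k) = r ^ k := by
    rw [neg_neg, mul_comm, Real.exp_nat_mul, Real.exp_log hr0]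
  -- entrywise identity
  have hent : ∀ i j, ∑ w : Fin k → ι, (∏ m, μ (w m)) * wordProd A w i j
      = (M ^ k) i j := by
    intro i j
    have h := congrFun (congrFun (congrArg (fun B => (B : Matrix (Fin n) (Fin n) ℝ))
      (key_sum A μ k)) i) j
    simpa [Matrix.sum_apply, Matrix.smul_apply, smul_eq_mul] using h
  have hMk_nonneg : ∀ i j, 0 ≤ (M ^ k) i j := by
    intro i j
    rw [← hent i j]
    exact Finset.sum_nonneg fun w _ => mul_nonneg
      (Finset.prod_nonneg fun m _ => hμ0 _) (wordProd_nonneg A hA w i j)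
  have hmap : (M ^ k).map (algebraMap ℝ ℂ) = N ^ k := by
    have := map_pow ((algebraMap ℝ ℂ).mapMatrix) M k
    simpa [RingHom.mapMatrix_apply, hN] using this
  have hNk : 0 ≤ ‖N ^ k‖ := norm_nonneg _
  calc ∑ w : Fin k → ι, (∏ m, μ (w m)) * ‖wordProd A w *ᵥ y‖
      ≤ ∑ w : Fin k → ι, (∏ m, μ (w m)) *
          ((∑ i, ∑ j, wordProd A w i j) * ‖y‖) := by
        refine Finset.sum_le_sum fun w _ => ?_
        exact mul_le_mul_of_nonneg_left
          (mulVec_norm_le _ (wordProd_nonneg A hA w) y)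
          (Finset.prod_nonneg fun m _ => hμ0 _)
  _ = (∑ i, ∑ j, (M ^ k) i j) * ‖y‖ := by
        simp only [← mul_assoc, ← Finset.sum_mul]
        congr 1
        calc ∑ w : Fin k → ι, (∏ m, μ (w m)) * ∑ i, ∑ j, wordProd A w i j
            = ∑ i, ∑ j, ∑ w : Fin k → ι, (∏ m, μ (w m)) * wordProd A w i j := by
              simp only [Finset.mul_sum]
              rw [Finset.sum_comm]
              exact Finset.sum_congr rfl fun i _ => Finset.sum_comm
        _ = _ := Finset.sum_congr rfl fun i _ =>
              Finset.sum_congr rfl fun j _ => hent i j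
  _ ≤ ((n : ℝ) * ‖N ^ k‖) * ‖y‖ := by
        refine mul_le_mul_of_nonneg_right ?_ (norm_nonneg y)
        calc ∑ i, ∑ j, (M ^ k) i j ≤ ∑ _i : Fin n, ‖N ^ k‖ := by
              refine Finset.sum_le_sum fun i _ => ?_
              rw [← hmap]
              exact rowsum_le_norm _ hMk_nonneg i
        _ = (n : ℝ) * ‖N ^ k‖ := by simp [Finset.sum_const, mul_comm]
  _ ≤ ((n : ℝ) * (C₀ * r ^ k)) * ‖y‖ := by
        refine mul_le_mul_of_nonneg_right
          (mul_le_mul_of_nonneg_left (hpow k) (by positivity)) (norm_nonneg y)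
  _ ≤ ((n : ℝ) * C₀ + 1) * Real.exp (-(-Real.log r) * k) * ‖y‖ := by
        rw [hexp]
        refine mul_le_mul_of_nonneg_right ?_ (norm_nonneg y)
        rw [← mul_assoc]
        refine mul_le_mul_of_nonneg_right ?_ (by positivity)
        linarith
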